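/- Let R be a 2-torsion free ring with unity and r ≥ 2 an integer. If T : M_r(R) → M_r(R) is an additive mapping satisfying 2T(xyx) = T(x)yx + xyT(x) for all x, y ∈ M_r(R), then there exists α in the center Z(R) of R such that T(x) = α·x for all x ∈ M_r(R); in particular, T is a two-sided centralizer. -/

import Mathlib

open Matrix

private lemma cancel_helper {M : Type*} [AddCommGroup M] {P Q B C : M}
    (H : (P + Q) + (P + Q) = (P + B) + (C + Q)) : P - B = C - Q := by
  have h2 : (P + Q) + (P + Q) = (P + Q) + (B + C) := H.trans (by abel)
  have h3 : P + Q = B + C := add_left_cancel h2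
  rw [sub_eq_sub_iff_add_eq_add, h3]
  abel

theorem centralizer_xyx_outer_matrix {R : Type*} [Ring R]
    (htf : ∀ a : R, 2 • a = 0 → a = 0)
    (r : ℕ) (hr : 2 ≤ r)
    (T : Matrix (Fin r) (Fin r) R → Matrix (Fin r) (Fin r) R)
    (hadd : ∀ x y, T (x + y) = T x + T y)
    (h : ∀ x y, 2 • T (x * y * x) = T x * y * x + x * y * T x) :
    (∃ α ∈ Subring.center R, ∀ x, T x = α • x) ∧
      ∀ x y, T (x * y) = T x * y ∧ T (x * y) = x * T y := by
  set a := T 1 with ha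
  have h1 : ∀ y, 2 • T y = a * y + y * a := by
    intro y
    have := h 1 y
    simpa using this
  have hkey : ∀ x y, (a * x - x * a) * y * x = x * y * (a * x - x * a) := by
    intro x y
    have H : (a * (x * (y * x)) + x * (y * (x * a))) + (a * (x * (y * x)) + x * (y * (x * a)))
        = (a * (x * (y * x)) + x * (a * (y * x))) + (x * (y * (a * x)) + x * (y * (x * a))) := by
      calc (a * (x * (y * x)) + x * (y * (x * a))) + (a * (x * (y * x)) + x * (y * (x * a)))
          = 2 • (a * (x * y * x) + (x * y * x) * a) := by
            rw [two_smul]; simp only [mul_assoc]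
        _ = 2 • (2 • T (x * y * x)) := by rw [h1 (x * y * x)]
        _ = 2 • (T x * y * x + x * y * T x) := by rw [h x y]
        _ = 2 • (T x * y * x) + 2 • (x * y * T x) := smul_add _ _ _
        _ = (2 • T x) * y * x + x * y * (2 • T x) := by
            rw [smul_mul_assoc, smul_mul_assoc, mul_smul_comm]
        _ = (a * x + x * a) * y * x + x * y * (a * x + x * a) := by rw [h1 x]
        _ = (a * (x * (y * x)) + x * (a * (y * x))) + (x * (y * (a * x)) + x * (y * (x * a))) := by
            simp only [add_mul, mul_add, mul_assoc]
    have := cancel_helper H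
    simp only [sub_mul, mul_sub, mul_assoc]
    exact this
  -- Step A : off-diagonal entries of a vanish
  have hA : ∀ i k : Fin r, i ≠ k → a i k = 0 := by
    intro i k hik
    have hk := hkey (Matrix.single k i (1:R)) (Matrix.single i k 1)
    have := congrFun (congrFun hk i) i
    simpa [Matrix.mul_apply, Matrix.single, Matrix.sub_apply, Finset.sum_ite_eq,
      Finset.sum_ite_eq', hik, hik.symm] using this
  -- Step B : all diagonal entries are equal
  have hB : ∀ k l : Fin r, k ≠ l → a k k = a l l := by
    intro k l hkl
    have hk := hkey (Matrix.single k l (1:R) + Matrix.single l k 1) (Matrix.single l l 1)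
    have h2 := congrFun (congrFun hk k) k
    simp [Matrix.mul_apply, Matrix.single, Matrix.sub_apply, Matrix.add_apply,
      Finset.sum_ite_eq, Finset.sum_ite_eq', hkl, hkl.symm, ite_and, mul_ite, ite_mul,
      mul_zero, zero_mul, mul_one, one_mul, sub_mul, mul_sub, Finset.sum_sub_distrib] at h2
    have h3 : 2 • (a k k - a l l) = 0 := by
      rw [two_smul]; nth_rewrite 2 [h2]; abel
    exact sub_eq_zero.mp (htf _ h3)
  -- Step C : the common diagonal entry is central
  have hC : ∀ (k l : Fin r), k ≠ l → ∀ b : R, a k k * b = b * a k k := by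
    intro k l hkl b
    have hk := hkey (Matrix.single k k b + Matrix.single k l 1) (Matrix.single k k 1)
    have h2 := congrFun (congrFun hk k) l
    simp [Matrix.mul_apply, Matrix.single, Matrix.sub_apply, Matrix.add_apply,
      Finset.sum_ite_eq, Finset.sum_ite_eq', hkl, hkl.symm, ite_and, mul_ite, ite_mul,
      mul_zero, zero_mul, mul_one, one_mul, sub_mul, mul_sub, Finset.sum_sub_distrib,
      add_mul, Finset.sum_add_distrib, hA k l hkl, hA l k hkl.symm,
      ← hB k l hkl] at h2
    exact sub_eq_zero.mp h2
  have h01 : (⟨0, by omega⟩ : Fin r) ≠ ⟨1, by omega⟩ := by simp [Fin.ext_iff]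
  set k0 : Fin r := ⟨0, by omega⟩ with hk0
  set k1 : Fin r := ⟨1, by omega⟩ with hk1
  set α : R := a k0 k0 with hα
  have hcent : ∀ b : R, α * b = b * α := hC k0 k1 h01
  have hdiag : ∀ i : Fin r, a i i = α := by
    intro i
    by_cases hi : i = k0
    · rw [hi]
    · exact hB i k0 hi
  -- a * x = α • x and x * a = α • x
  have hax : ∀ x : Matrix (Fin r) (Fin r) R, a * x = α • x := by
    intro x
    ext i j
    rw [Matrix.mul_apply, Matrix.smul_apply, smul_eq_mul]
    rw [Finset.sum_eq_single i]
    · rw [hdiag i]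
    · intro m _ hm
      rw [hA i m (Ne.symm hm), zero_mul]
    · intro hi; exact absurd (Finset.mem_univ i) hi
  have hxa : ∀ x : Matrix (Fin r) (Fin r) R, x * a = α • x := by
    intro x
    ext i j
    rw [Matrix.mul_apply, Matrix.smul_apply, smul_eq_mul]
    rw [Finset.sum_eq_single j]
    · rw [hdiag j, ← hcent (x i j)]
    · intro m _ hm
      rw [hA m j hm, mul_zero]
    · intro hj; exact absurd (Finset.mem_univ j) hj
  have hT : ∀ x, T x = α • x := by
    intro x
    have e : (2:ℕ) • T x = (2:ℕ) • (α • x) := by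
      rw [h1 x, hax x, hxa x, two_smul]
    ext i j
    have e3 := congrFun (congrFun e i) j
    simp only [Matrix.smul_apply] at e3
    have h4 : T x i j - (α • x) i j = 0 := htf _ (by rw [smul_sub]; simp only [Matrix.smul_apply]; rw [e3, sub_self])
    exact sub_eq_zero.mp h4
  have hsmul_mul : ∀ x y : Matrix (Fin r) (Fin r) R, (α • x) * y = α • (x * y) := by
    intro x y
    ext i j
    simp only [Matrix.mul_apply, Matrix.smul_apply, smul_eq_mul, Finset.mul_sum]
    exact Finset.sum_congr rfl fun m _ => by rw [mul_assoc]
  have hmul_smul : ∀ x y : Matrix (Fin r) (Fin r) R, x * (α • y) = α • (x * y) := by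
    intro x y
    ext i j
    simp only [Matrix.mul_apply, Matrix.smul_apply, smul_eq_mul, Finset.mul_sum]
    exact Finset.sum_congr rfl fun m _ => by rw [← mul_assoc, ← hcent (x i m), mul_assoc]
  refine ⟨⟨α, Subring.mem_center_iff.mpr fun g => (hcent g).symm, hT⟩, ?_⟩
  intro x y
  constructor
  · rw [hT (x * y), hT x, hsmul_mul]
  · rw [hT (x * y), hT y, hmul_smul]
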